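/- arXiv:0910.5664 — 5 statements merged into one kernel-verified Lean document; each statement's English description precedes it below -/
import Mathlib

section
/- Let A be a commutative ring, n a positive integer, u ∈ A[t], and set f(t) = u(t+n) - u(t). In the Smith algebra S(A, f, n), the element Ω = xy - u(e) is central: it commutes with x, y, and e. -/
open Polynomial

/-- Defining relations of the Smith algebra `S(A, f, n)`: generators `x = ι 0`,
`y = ι 1`, `e = ι 2` with `[e,x] = nx`, `[e,y] = -ny`, `[y,x] = f(e)`. -/
inductive SmithRel (A : Type*) [CommRing A] (f : Polynomial A) (n : ℕ) :
    FreeAlgebra A (Fin 3) → FreeAlgebra A (Fin 3) → Prop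
  | ex : SmithRel A f n (FreeAlgebra.ι A 2 * FreeAlgebra.ι A 0)
      (FreeAlgebra.ι A 0 * FreeAlgebra.ι A 2 + n • FreeAlgebra.ι A 0)
  | ey : SmithRel A f n (FreeAlgebra.ι A 2 * FreeAlgebra.ι A 1)
      (FreeAlgebra.ι A 1 * FreeAlgebra.ι A 2 - n • FreeAlgebra.ι A 1)
  | yx : SmithRel A f n (FreeAlgebra.ι A 1 * FreeAlgebra.ι A 0)
      (FreeAlgebra.ι A 0 * FreeAlgebra.ι A 1 +
        f.eval₂ (algebraMap A (FreeAlgebra A (Fin 3))) (FreeAlgebra.ι A 2))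

/-- The Smith algebra `S(A, f, n)`. -/
abbrev SmithAlgebra (A : Type*) [CommRing A] (f : Polynomial A) (n : ℕ) :=
  RingQuot (SmithRel A f n)

/-- The generator `x` of the Smith algebra. -/
noncomputable def Smith.x (A : Type*) [CommRing A] (f : Polynomial A) (n : ℕ) :
    SmithAlgebra A f n := RingQuot.mkAlgHom A (SmithRel A f n) (FreeAlgebra.ι A 0)

/-- The generator `y` of the Smith algebra. -/
noncomputable def Smith.y (A : Type*) [CommRing A] (f : Polynomial A) (n : ℕ) :
    SmithAlgebra A f n := RingQuot.mkAlgHom A (SmithRel A f n) (FreeAlgebra.ι A 1)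

/-- The generator `e` of the Smith algebra. -/
noncomputable def Smith.e (A : Type*) [CommRing A] (f : Polynomial A) (n : ℕ) :
    SmithAlgebra A f n := RingQuot.mkAlgHom A (SmithRel A f n) (FreeAlgebra.ι A 2)

/-- Evaluation of a composition in a possibly noncommutative algebra. -/
lemma my_aeval_comp {A S : Type*} [CommRing A] [Ring S] [Algebra A S] (e : S)
    (p q : Polynomial A) : aeval e (p.comp q) = aeval (aeval e q) p := by
  induction p using Polynomial.induction_on' with
  | add p r hp hr => simp [add_comp, hp, hr]
  | monomial k b => simp [monomial_comp, aeval_monomial]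

/-- If `e * x = x * e'`, then `p(e) * x = x * p(e')`. -/
lemma my_aeval_semiconj {A S : Type*} [CommRing A] [Ring S] [Algebra A S] {e x e' : S}
    (h : e * x = x * e') (p : Polynomial A) : aeval e p * x = x * aeval e' p := by
  have hpow : ∀ k : ℕ, e ^ k * x = x * e' ^ k := by
    intro k
    induction k with
    | zero => simp
    | succ k ih => rw [pow_succ, pow_succ, mul_assoc, h, ← mul_assoc, ih, mul_assoc]
  induction p using Polynomial.induction_on' with
  | add p r hp hr => simp [add_mul, mul_add, hp, hr]
  | monomial k b =>
    rw [aeval_monomial, aeval_monomial, mul_assoc, hpow, ← mul_assoc,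
      Algebra.commutes, mul_assoc]

/-- The abstract centrality computation. -/
lemma central_aux {A S : Type*} [CommRing A] [Ring S] [Algebra A S] (n : ℕ)
    (u : Polynomial A) (x y e : S)
    (hex : e * x = x * e + n • x)
    (hey : e * y = y * e - n • y)
    (hyx : y * x = x * y + aeval e (u.comp (X + C (n : A)) - u)) :
    (x * y - aeval e u) * x = x * (x * y - aeval e u) ∧
    (x * y - aeval e u) * y = y * (x * y - aeval e u) ∧
    (x * y - aeval e u) * e = e * (x * y - aeval e u) := by
  have hex' : e * x = x * (e + (n : S)) := by
    rw [hex, mul_add]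
    congr 1
    rw [nsmul_eq_mul]
    exact (Nat.cast_commute n x).eq
  have hey' : e * y = y * (e - (n : S)) := by
    rw [hey, mul_sub]
    congr 1
    rw [nsmul_eq_mul]
    exact (Nat.cast_commute n y).eq
  have hf : aeval e (u.comp (X + C (n : A)) - u) = aeval (e + (n : S)) u - aeval e u := by
    rw [map_sub, my_aeval_comp]
    simp
  have hux := my_aeval_semiconj hex' u
  have huy := my_aeval_semiconj hey' u
  have hFy : aeval e (u.comp (X + C (n : A)) - u) * y
      = y * (aeval e u - aeval (e - (n : S)) u) := by
    rw [my_aeval_semiconj hey' (u.comp (X + C (n : A)) - u)]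
    congr 1
    rw [map_sub, my_aeval_comp]
    simp [sub_add_cancel]
  refine ⟨?_, ?_, ?_⟩
  · rw [sub_mul, mul_assoc, hyx, hf, hux, mul_sub, mul_add, mul_sub]
    abel
  · have h3 : y * (x * y) = x * y * y + y * (aeval e u - aeval (e - (n : S)) u) := by
      rw [← mul_assoc, hyx, add_mul, hFy]
    rw [sub_mul, mul_sub, huy, h3, mul_sub]
    abel
  · have hue : aeval e u * e = e * aeval e u :=
      my_aeval_semiconj (rfl : e * e = e * e) u
    have hye : y * e = e * y + n • y := by rw [hey]; abel
    have hxe : x * e = e * x - n • x := by rw [hex]; abel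
    have hxye : x * y * e = e * (x * y) := by
      calc x * y * e = x * (y * e) := by rw [mul_assoc]
        _ = x * (e * y) + n • (x * y) := by rw [hye, mul_add, mul_smul_comm]
        _ = (x * e) * y + n • (x * y) := by rw [mul_assoc]
        _ = e * x * y - n • (x * y) + n • (x * y) := by
            rw [hxe, sub_mul, smul_mul_assoc]
        _ = e * (x * y) := by rw [mul_assoc]; abel
    rw [sub_mul, mul_sub, hue, hxye]

/-- If `f(t) = u(t+n) - u(t)`, then `Ω = xy - u(e)` is central in `S(A, f, n)`:
it commutes with `x`, `y` and `e`. -/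
theorem stmt7 (A : Type*) [CommRing A] (n : ℕ) (hn : 0 < n) (u : Polynomial A) :
    let f := u.comp (X + C (n : A)) - u
    let x := Smith.x A f n
    let y := Smith.y A f n
    let e := Smith.e A f n
    let Ω := x * y - u.eval₂ (algebraMap A (SmithAlgebra A f n)) e
    Ω * x = x * Ω ∧ Ω * y = y * Ω ∧ Ω * e = e * Ω := by
  intro f x y e Ω
  have hex : Smith.e A f n * Smith.x A f n
      = Smith.x A f n * Smith.e A f n + n • Smith.x A f n := by
    have h := RingQuot.mkAlgHom_rel A (SmithRel.ex (A := A) (f := f) (n := n))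
    simp only [map_mul, map_add, map_nsmul] at h
    exact h
  have hey : Smith.e A f n * Smith.y A f n
      = Smith.y A f n * Smith.e A f n - n • Smith.y A f n := by
    have h := RingQuot.mkAlgHom_rel A (SmithRel.ey (A := A) (f := f) (n := n))
    simp only [map_mul, map_sub, map_nsmul] at h
    exact h
  have hyx : Smith.y A f n * Smith.x A f n
      = Smith.x A f n * Smith.y A f n
        + aeval (Smith.e A f n) (u.comp (X + C (n : A)) - u) := by
    have h := RingQuot.mkAlgHom_rel A (SmithRel.yx (A := A) (f := f) (n := n))
    simp only [map_mul, map_add, ← aeval_def, ← Polynomial.aeval_algHom_apply] at h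
    exact h
  exact central_aux n u (Smith.x A f n) (Smith.y A f n) (Smith.e A f n) hex hey hyx
end

section
/- Let A be a commutative ring without zero divisors, n a positive integer, u ∈ A[t], and f(t) = u(t+n) - u(t). Then the quotient of the Smith algebra S(A, f, n) by the two-sided ideal generated by Ω = xy - u(e) is isomorphic as an A-algebra to U(A, u, n). -/
open Polynomial

lemma aeval_comp_noncomm {A S : Type*} [CommRing A] [Ring S] [Algebra A S]
    (s : S) (p q : Polynomial A) :
    aeval s (p.comp q) = aeval (aeval s q) p := by
  have h : ((aeval s : Polynomial A →ₐ[A] S) : Polynomial A →+* S).comp (C : A →+* Polynomial A)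
      = algebraMap A S := by
    ext a; simp
  have := Polynomial.hom_eval₂ p (C : A →+* Polynomial A)
    ((aeval s : Polynomial A →ₐ[A] S) : Polynomial A →+* S) q
  simpa [Polynomial.comp, h, Polynomial.aeval_def] using this

lemma aeval_add_natCast {A S : Type*} [CommRing A] [Ring S] [Algebra A S]
    (s : S) (n : ℕ) (u : Polynomial A) :
    aeval s (u.comp (X + C (n : A))) = aeval (s + (n : S)) u := by
  rw [aeval_comp_noncomm]
  congr 1
  simp [map_natCast]

/-- Defining relations of the algebra `U(A, u, n)`: generators `x̃ = ι 0`, `ỹ = ι 1`,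
`ẽ = ι 2` with `[ẽ,x̃] = nx̃`, `[ẽ,ỹ] = -nỹ`, `x̃ỹ = u(ẽ)`, `ỹx̃ = u(ẽ+n)`. -/
inductive URel (A : Type*) [CommRing A] (u : Polynomial A) (n : ℕ) :
    FreeAlgebra A (Fin 3) → FreeAlgebra A (Fin 3) → Prop
  | ex : URel A u n (FreeAlgebra.ι A 2 * FreeAlgebra.ι A 0)
      (FreeAlgebra.ι A 0 * FreeAlgebra.ι A 2 + n • FreeAlgebra.ι A 0)
  | ey : URel A u n (FreeAlgebra.ι A 2 * FreeAlgebra.ι A 1)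
      (FreeAlgebra.ι A 1 * FreeAlgebra.ι A 2 - n • FreeAlgebra.ι A 1)
  | xy : URel A u n (FreeAlgebra.ι A 0 * FreeAlgebra.ι A 1)
      (u.eval₂ (algebraMap A (FreeAlgebra A (Fin 3))) (FreeAlgebra.ι A 2))
  | yx : URel A u n (FreeAlgebra.ι A 1 * FreeAlgebra.ι A 0)
      (u.eval₂ (algebraMap A (FreeAlgebra A (Fin 3)))
        (FreeAlgebra.ι A 2 + (n : FreeAlgebra A (Fin 3))))

/-- The algebra `U(A, u, n)`. -/
abbrev UAlgebra (A : Type*) [CommRing A] (u : Polynomial A) (n : ℕ) :=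
  RingQuot (URel A u n)

/-- With `f(t) = u(t+n) - u(t)`, the quotient of the Smith algebra `S(A, f, n)` by the
two-sided ideal generated by `Ω = xy - u(e)` is isomorphic to `U(A, u, n)` as an
`A`-algebra. -/
theorem stmt8 (A : Type*) [CommRing A] [IsDomain A] (n : ℕ) (hn : 0 < n)
    (u : Polynomial A) :
    let f := u.comp (X + C (n : A)) - u
    let x := RingQuot.mkAlgHom A (SmithRel A f n) (FreeAlgebra.ι A 0)
    let y := RingQuot.mkAlgHom A (SmithRel A f n) (FreeAlgebra.ι A 1)
    let e := RingQuot.mkAlgHom A (SmithRel A f n) (FreeAlgebra.ι A 2)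
    let Ω := x * y - u.eval₂ (algebraMap A (SmithAlgebra A f n)) e
    Nonempty
      (RingQuot (fun a b : SmithAlgebra A f n => a = Ω ∧ b = 0) ≃ₐ[A] UAlgebra A u n) := by
  intro f x y e Ω
  set mk1 := RingQuot.mkAlgHom A (SmithRel A f n) with hmk1
  set R2 := (fun a b : SmithAlgebra A f n => a = Ω ∧ b = 0)
  set mk2 := RingQuot.mkAlgHom A R2 with hmk2
  set mkU := RingQuot.mkAlgHom A (URel A u n) with hmkU
  -- notation in U
  have hUxy : mkU (FreeAlgebra.ι A 0 * FreeAlgebra.ι A 1)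
      = aeval (mkU (FreeAlgebra.ι A 2)) u := by
    rw [RingQuot.mkAlgHom_rel A URel.xy, ← Polynomial.aeval_def,
      ← Polynomial.aeval_algHom_apply]
  have hUyx : mkU (FreeAlgebra.ι A 1 * FreeAlgebra.ι A 0)
      = aeval (mkU (FreeAlgebra.ι A 2) + (n : UAlgebra A u n)) u := by
    rw [RingQuot.mkAlgHom_rel A URel.yx, ← Polynomial.aeval_def,
      ← Polynomial.aeval_algHom_apply]
    simp
    rfl
  -- the map S(A,f,n) → U(A,u,n)
  have hrelS : ∀ ⦃a b : FreeAlgebra A (Fin 3)⦄, SmithRel A f n a b → mkU a = mkU b := by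
    intro a b h
    cases h with
    | ex => exact RingQuot.mkAlgHom_rel A URel.ex
    | ey => exact RingQuot.mkAlgHom_rel A URel.ey
    | yx =>
      rw [map_add, map_mul, ← map_mul, hUxy, hUyx, ← Polynomial.aeval_def,
        ← Polynomial.aeval_algHom_apply]
      show _ = _ + aeval (mkU (FreeAlgebra.ι A 2)) (u.comp (X + C (n : A)) - u)
      rw [map_sub, aeval_add_natCast]
      abel
  set φ : SmithAlgebra A f n →ₐ[A] UAlgebra A u n :=
    RingQuot.liftAlgHom A ⟨mkU, hrelS⟩ with hφ
  have hφmk : ∀ a, φ (mk1 a) = mkU a := fun a =>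
    RingQuot.liftAlgHom_mkAlgHom_apply A mkU hrelS a
  have hφΩ : φ Ω = 0 := by
    show φ (x * y - u.eval₂ (algebraMap A (SmithAlgebra A f n)) e) = 0
    rw [← Polynomial.aeval_def, map_sub, map_mul, ← Polynomial.aeval_algHom_apply]
    show φ (mk1 _) * φ (mk1 _) - aeval (φ (mk1 _)) u = 0
    rw [hφmk, hφmk, hφmk, ← map_mul, hUxy, sub_self]
  have hrel2 : ∀ ⦃a b : SmithAlgebra A f n⦄, R2 a b → φ a = φ b := by
    rintro a b ⟨rfl, rfl⟩
    rw [hφΩ, map_zero]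
  set F : RingQuot R2 →ₐ[A] UAlgebra A u n :=
    RingQuot.liftAlgHom A ⟨φ, hrel2⟩ with hF
  -- relations in the double quotient
  have hΩ0 : mk2 Ω = 0 := by
    have h2 : R2 Ω 0 := ⟨rfl, rfl⟩
    rw [RingQuot.mkAlgHom_rel A h2, map_zero]
  have hQxy : mk2 (mk1 (FreeAlgebra.ι A 0 * FreeAlgebra.ι A 1))
      = aeval (mk2 (mk1 (FreeAlgebra.ι A 2))) u := by
    have hxy : mk1 (FreeAlgebra.ι A 0 * FreeAlgebra.ι A 1)
        = Ω + u.eval₂ (algebraMap A (SmithAlgebra A f n)) e := by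
      show _ = x * y - _ + _
      rw [sub_add_cancel, map_mul]
    rw [hxy, map_add, hΩ0, zero_add, ← Polynomial.aeval_def,
      ← Polynomial.aeval_algHom_apply]
  have hrelU : ∀ ⦃a b : FreeAlgebra A (Fin 3)⦄, URel A u n a b →
      mk2 (mk1 a) = mk2 (mk1 b) := by
    intro a b h
    cases h with
    | ex => rw [RingQuot.mkAlgHom_rel A SmithRel.ex]
    | ey => rw [RingQuot.mkAlgHom_rel A SmithRel.ey]
    | xy =>
      rw [hQxy, ← Polynomial.aeval_def, ← Polynomial.aeval_algHom_apply,
        ← Polynomial.aeval_algHom_apply]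
    | yx =>
      rw [RingQuot.mkAlgHom_rel A SmithRel.yx, map_add, map_add, hQxy,
        ← Polynomial.aeval_def, ← Polynomial.aeval_def,
        ← Polynomial.aeval_algHom_apply, ← Polynomial.aeval_algHom_apply,
        ← Polynomial.aeval_algHom_apply, ← Polynomial.aeval_algHom_apply]
      show _ + aeval (mk2 (mk1 (FreeAlgebra.ι A 2))) (u.comp (X + C (n : A)) - u)
        = aeval (mk2 (mk1 (FreeAlgebra.ι A 2 + (n : FreeAlgebra A (Fin 3))))) u
      have h3 := aeval_add_natCast (mk2 (mk1 (FreeAlgebra.ι A 2))) n u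
      rw [map_sub, h3]
      simp only [map_add, map_natCast]
      abel
  set G : UAlgebra A u n →ₐ[A] RingQuot R2 :=
    RingQuot.liftAlgHom A ⟨mk2.comp mk1, hrelU⟩ with hG
  have hGmk : ∀ a, G (mkU a) = mk2 (mk1 a) := fun a =>
    RingQuot.liftAlgHom_mkAlgHom_apply A (mk2.comp mk1) hrelU a
  -- the two compositions are the identity
  have hFG : F.comp G = AlgHom.id A (UAlgebra A u n) := by
    apply RingQuot.ringQuot_ext'
    apply FreeAlgebra.hom_ext
    funext i
    show F (G (mkU (FreeAlgebra.ι A i))) = mkU (FreeAlgebra.ι A i)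
    rw [hGmk]
    show F (mk2 (mk1 _)) = _
    rw [RingQuot.liftAlgHom_mkAlgHom_apply, hφmk]
  have hGF : G.comp F = AlgHom.id A (RingQuot R2) := by
    apply RingQuot.ringQuot_ext'
    apply RingQuot.ringQuot_ext'
    apply FreeAlgebra.hom_ext
    funext i
    show G (F (mk2 (mk1 (FreeAlgebra.ι A i)))) = mk2 (mk1 (FreeAlgebra.ι A i))
    rw [show F (mk2 (mk1 (FreeAlgebra.ι A i))) = φ (mk1 (FreeAlgebra.ι A i)) from
      RingQuot.liftAlgHom_mkAlgHom_apply A φ hrel2 _, hφmk, hGmk]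
  exact ⟨AlgEquiv.ofAlgHom F G hFG hGF⟩
end

section
/- Let R be a commutative domain containing ℚ, and let τ be a ring automorphism of R such that there exists t ∈ R with τ(t) = t + 1. Then the center of the skew Laurent polynomial ring R[X, X⁻¹; τ] equals the fixed subring R^τ = {a ∈ R : τ(a) = a}. -/
/-- Let `R` be a commutative domain containing `ℚ` and `τ` an automorphism of `R`
moving some `t` to `t + 1`.  If `T` is a skew Laurent polynomial ring `R[X,X⁻¹;τ]`,
i.e. `T` contains `R` via `φ`, has an invertible element `X` with `X·a = τ(a)·X`, and
is free as a left `R`-module with basis the powers of `X`, then the center of `T` is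
the image of the fixed ring `R^τ`. -/
theorem stmt10 (R T : Type*) [CommRing R] [IsDomain R] [Algebra ℚ R] [Ring T]
    (τ : R ≃+* R) (t : R) (ht : τ t = t + 1)
    (φ : R →+* T) (hφ : Function.Injective φ)
    (X : Tˣ) (hX : ∀ a : R, (X : T) * φ a = φ (τ a) * X)
    (hbasis : Function.Bijective
      (fun c : ℤ →₀ R => c.sum fun p a => φ a * ((X ^ p : Tˣ) : T))) :
    (Subring.center T : Set T) = φ '' {a : R | τ a = a} := by
  haveI : CharZero R := charZero_of_injective_algebraMap (algebraMap ℚ R).injective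
  -- X⁻¹ version of the commutation rule
  have hXinv : ∀ a : R, ((X⁻¹ : Tˣ) : T) * φ a = φ (τ.symm a) * ((X⁻¹ : Tˣ) : T) := by
    intro a
    have h := hX (τ.symm a)
    rw [τ.apply_symm_apply] at h
    calc ((X⁻¹ : Tˣ) : T) * φ a
        = ((X⁻¹ : Tˣ) : T) * ((φ a * X) * ((X⁻¹ : Tˣ) : T)) := by
          rw [mul_assoc, Units.mul_inv, mul_one]
      _ = ((X⁻¹ : Tˣ) : T) * (((X : T) * φ (τ.symm a)) * ((X⁻¹ : Tˣ) : T)) := by rw [h]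
      _ = φ (τ.symm a) * ((X⁻¹ : Tˣ) : T) := by
          rw [← mul_assoc, ← mul_assoc, Units.inv_mul, one_mul]
  -- commutation rule for powers of X
  have hXp : ∀ (p : ℤ) (a : R), ((X ^ p : Tˣ) : T) * φ a = φ ((τ ^ p) a) * ((X ^ p : Tˣ) : T) := by
    intro p
    induction p using Int.induction_on with
    | zero => intro a; simp only [zpow_zero, Units.val_one, one_mul, mul_one]; rfl
    | succ n ih =>
        intro a
        have e1 : X ^ ((n : ℤ) + 1) = X ^ (n : ℤ) * X := by rw [zpow_add_one]
        have e2 : (τ ^ ((n : ℤ) + 1)) a = (τ ^ (n : ℤ)) (τ a) := by rw [zpow_add_one]; rfl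
        rw [e1, e2, Units.val_mul, mul_assoc, hX, ← mul_assoc, ih, mul_assoc]
    | pred n ih =>
        intro a
        have e1 : X ^ (-(n : ℤ) - 1) = X ^ (-(n : ℤ)) * X⁻¹ := by rw [zpow_sub_one]
        have e2 : (τ ^ (-(n : ℤ) - 1)) a = (τ ^ (-(n : ℤ))) (τ.symm a) := by
          rw [zpow_sub_one]; rfl
        rw [e1, e2, Units.val_mul, mul_assoc, hXinv, ← mul_assoc, ih, mul_assoc]
  -- τ.symm moves t to t - 1
  have hsymm : τ.symm t = t - 1 := by
    have h := congrArg τ.symm ht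
    rw [τ.symm_apply_apply, map_add, map_one] at h
    linear_combination -h
  -- powers of τ translate t
  have hτt : ∀ p : ℤ, (τ ^ p) t = t + p := by
    intro p
    induction p using Int.induction_on with
    | zero =>
        show (1 : R ≃+* R) t = t + ((0 : ℤ) : R)
        rw [Int.cast_zero, add_zero]; rfl
    | succ n ih =>
        have e2 : (τ ^ ((n : ℤ) + 1)) t = (τ ^ (n : ℤ)) (τ t) := by rw [zpow_add_one]; rfl
        rw [e2, ht, map_add, map_one, ih]
        push_cast; ring
    | pred n ih =>
        have e2 : (τ ^ (-(n : ℤ) - 1)) t = (τ ^ (-(n : ℤ))) (τ.symm t) := by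
          rw [zpow_sub_one]; rfl
        rw [e2, hsymm, map_sub, map_one, ih]
        push_cast; ring
  ext z
  simp only [SetLike.mem_coe, Set.mem_image, Set.mem_setOf_eq]
  constructor
  · intro hz
    rw [Subring.mem_center_iff] at hz
    obtain ⟨c, hc⟩ := hbasis.2 z
    simp only at hc
    -- z = ∑ p in c.support, φ (c p) * X^p
    have hzsum : z = ∑ p ∈ c.support, φ (c p) * ((X ^ p : Tˣ) : T) := hc.symm
    -- commute with φ t
    have h1 : φ t * z = ∑ p ∈ c.support, φ (t * c p) * ((X ^ p : Tˣ) : T) := by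
      rw [hzsum, Finset.mul_sum]
      refine Finset.sum_congr rfl fun p _ => ?_
      rw [← mul_assoc, ← map_mul]
    have h2 : z * φ t = ∑ p ∈ c.support, φ (c p * (t + p)) * ((X ^ p : Tˣ) : T) := by
      rw [hzsum, Finset.sum_mul]
      refine Finset.sum_congr rfl fun p _ => ?_
      rw [mul_assoc, hXp, ← mul_assoc, ← map_mul, hτt]
    set d : ℤ →₀ R := Finsupp.onFinset c.support (fun p => t * c p - c p * (t + p))
      (fun p hp => Finsupp.mem_support_iff.2 fun h => hp (by simp [h])) with hd
    have hdsum : (d.sum fun p a => φ a * ((X ^ p : Tˣ) : T)) = 0 := by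
      rw [hd, Finsupp.onFinset_sum _ (fun p => by simp)]
      have : ∀ p ∈ c.support,
          φ (t * c p - c p * (t + p)) * ((X ^ p : Tˣ) : T)
          = φ (t * c p) * ((X ^ p : Tˣ) : T) - φ (c p * (t + p)) * ((X ^ p : Tˣ) : T) := by
        intro p _; rw [map_sub, sub_mul]
      rw [Finset.sum_congr rfl this, Finset.sum_sub_distrib, ← h1, ← h2, hz (φ t), sub_self]
    have hd0 : d = 0 := by
      apply hbasis.1
      simp only [hdsum, Finsupp.sum_zero_index]
    have hcp : ∀ p : ℤ, p ≠ 0 → c p = 0 := by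
      intro p hp
      have hdp : t * c p - c p * (t + p) = 0 := by
        have := DFunLike.congr_fun hd0 p
        simpa [hd] using this
      have hmul : c p * (p : R) = 0 := by linear_combination -hdp
      rcases mul_eq_zero.1 hmul with h | h
      · exact h
      · exact absurd h (Int.cast_ne_zero.2 hp)
    have hsupp : c.support ⊆ {0} := by
      intro p hp
      rw [Finsupp.mem_support_iff] at hp
      simp only [Finset.mem_singleton]
      by_contra h
      exact hp (hcp p h)
    have hcs : c = Finsupp.single 0 (c 0) := Finsupp.support_subset_singleton.1 hsupp
    have hz0 : z = φ (c 0) := by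
      rw [hzsum]
      rcases Finset.subset_singleton_iff.1 hsupp with h | h
      · rw [h, Finset.sum_empty]
        have : c 0 = 0 := by
          by_contra hne
          exact absurd (Finsupp.mem_support_iff.2 hne) (by simp [h])
        simp [this]
      · rw [h, Finset.sum_singleton]; simp
    refine ⟨c 0, ?_, hz0.symm⟩
    have hXz := hz (X : T)
    rw [hz0, hX] at hXz
    have : φ (τ (c 0)) = φ (c 0) := by
      have := congrArg (· * ((X⁻¹ : Tˣ) : T)) hXz
      simpa [mul_assoc] using this
    exact hφ this
  · rintro ⟨a, ha, rfl⟩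
    rw [Subring.mem_center_iff]
    intro g
    obtain ⟨c, rfl⟩ := hbasis.2 g
    simp only
    have hcomm : Commute (φ a) (X : T) := by
      have : (X : T) * φ a = φ a * (X : T) := by rw [hX, ha]
      exact this.symm
    rw [Finsupp.sum_mul, Finsupp.mul_sum]
    refine Finsupp.sum_congr fun p _ => ?_
    rw [mul_assoc, ← (hcomm.units_zpow_right p).eq, ← mul_assoc, ← map_mul, mul_comm (c p) a,
      map_mul, mul_assoc]
end

section
/- In the Weyl algebra A₁, the Lie subalgebra generated by x³ and ∂³ (under the commutator bracket) is infinite-dimensional over ℂ. -/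
open Polynomial

attribute [local instance 100] LieRing.ofAssociativeRing

/-- Multiplication by `x` on `ℂ[x]`. -/
noncomputable def Wx : Module.End ℂ (Polynomial ℂ) := LinearMap.mulLeft ℂ (X : ℂ[X])

/-- The derivative operator `∂` on `ℂ[x]`. -/
noncomputable def Wd : Module.End ℂ (Polynomial ℂ) := Polynomial.derivative


lemma Wx_pow (n : ℕ) : (Wx ^ 3) (X ^ n) = X ^ (n + 3) := by
  simp [Wx, pow_succ, LinearMap.mulLeft_apply]
  ring

lemma Wd_apply (p : ℂ[X]) : Wd p = derivative p := rfl

lemma Wd_X_pow (m : ℕ) : Wd (X ^ m : ℂ[X]) = (m : ℂ) • X ^ (m - 1) := by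
  simp [Wd, derivative_X_pow, smul_eq_C_mul]

noncomputable def hop : Module.End ℂ (Polynomial ℂ) := ⁅Wd ^ 3, Wx ^ 3⁆

lemma Wd3_X_pow (m : ℕ) :
    (Wd ^ 3) (X ^ (m + 3) : ℂ[X]) = (((m+3)*(m+2)*(m+1) : ℕ) : ℂ) • X ^ m := by
  have : (Wd ^ 3) (X ^ (m + 3) : ℂ[X]) = Wd (Wd (Wd (X ^ (m+3)))) := by
    simp [pow_succ, Module.End.mul_apply]
  rw [this, Wd_X_pow]
  simp only [map_smul, Nat.add_sub_cancel]
  rw [show m + 3 - 1 = m + 2 by omega, Wd_X_pow]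
  simp only [smul_smul, map_smul]
  rw [show m + 2 - 1 = m + 1 by omega, Wd_X_pow]
  rw [show m + 1 - 1 = m by omega, smul_smul]
  push_cast
  ring_nf

lemma Wd3_small (n : ℕ) (hn : n < 3) : (Wd ^ 3) (X ^ n : ℂ[X]) = 0 := by
  have h3 : (Wd ^ 3) (X ^ n : ℂ[X]) = Wd (Wd (Wd (X ^ n))) := by
    simp [pow_succ, Module.End.mul_apply]
  rw [h3]
  simp only [Wd_X_pow, map_smul, smul_smul]
  interval_cases n <;> norm_num

lemma hop_X_pow (n : ℕ) :
    hop (X ^ n : ℂ[X]) = ((9*n^2 + 9*n + 6 : ℕ) : ℂ) • X ^ n := by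
  have key : hop (X ^ n : ℂ[X])
      = (Wd ^ 3) ((Wx ^ 3) (X ^ n)) - (Wx ^ 3) ((Wd ^ 3) (X ^ n)) := by
    simp [hop, Ring.lie_def, LinearMap.sub_apply, Module.End.mul_apply]
  rw [key, Wx_pow, Wd3_X_pow]
  by_cases hn : n < 3
  · rw [Wd3_small n hn, map_zero, sub_zero]
    congr 1
    interval_cases n <;> norm_num
  · obtain ⟨m, rfl⟩ : ∃ m, n = m + 3 := ⟨n - 3, by omega⟩
    rw [Wd3_X_pow, map_smul, Wx_pow, ← sub_smul]
    congr 1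
    push_cast
    ring

noncomputable def Sop : ℕ → Module.End ℂ (Polynomial ℂ)
  | 0 => Wx ^ 3
  | k + 1 => ⁅hop, Sop k⁆

lemma Sop_X_pow (k n : ℕ) :
    Sop k (X ^ n : ℂ[X]) = (((54*n + 108 : ℕ) : ℂ)) ^ k • X ^ (n + 3) := by
  induction k with
  | zero => simp [Sop, Wx_pow]
  | succ k ih =>
      have : Sop (k+1) (X ^ n : ℂ[X])
          = hop (Sop k (X ^ n)) - Sop k (hop (X ^ n)) := by
        simp [Sop, Ring.lie_def, LinearMap.sub_apply, Module.End.mul_apply]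
      rw [this, ih, hop_X_pow, map_smul, map_smul, ih]
      rw [hop_X_pow, smul_smul, smul_smul, ← sub_smul]
      congr 1
      push_cast
      ring

/-- In the Weyl algebra `A₁`, the Lie subalgebra generated by `x³` and `∂³` is
infinite-dimensional over `ℂ`. -/
theorem stmt15 :
    ¬ Module.Finite ℂ
      ↥(LieSubalgebra.lieSpan ℂ (Module.End ℂ (Polynomial ℂ)) {Wx ^ 3, Wd ^ 3}) := by
  intro hfin
  set L := LieSubalgebra.lieSpan ℂ (Module.End ℂ (Polynomial ℂ)) {Wx ^ 3, Wd ^ 3} with hL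
  have hxmem : Wx ^ 3 ∈ L := LieSubalgebra.subset_lieSpan (by simp)
  have hdmem : Wd ^ 3 ∈ L := LieSubalgebra.subset_lieSpan (by simp)
  have hhmem : hop ∈ L := L.lie_mem hdmem hxmem
  have hSmem : ∀ k, Sop k ∈ L := by
    intro k
    induction k with
    | zero => exact hxmem
    | succ k ih => exact L.lie_mem hhmem ih
  have hind : LinearIndependent ℂ Sop := by
    rw [linearIndependent_iff']
    intro s g hsum i hi
    set p : ℂ[X] := ∑ k ∈ s, C (g k) * X ^ k with hp
    have heval : ∀ n : ℕ, p.eval (((54 * n + 108 : ℕ) : ℂ)) = 0 := by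
      intro n
      have h1 : (∑ k ∈ s, g k • Sop k) (X ^ n : ℂ[X]) = 0 := by rw [hsum]; rfl
      rw [LinearMap.sum_apply] at h1
      simp only [LinearMap.smul_apply, Sop_X_pow, smul_smul] at h1
      rw [← Finset.sum_smul, smul_eq_zero] at h1
      rcases h1 with h1 | h1
      · rw [hp, eval_finset_sum]
        simp only [eval_mul, eval_C, eval_pow, eval_X]
        exact h1
      · exact absurd h1 (pow_ne_zero _ X_ne_zero)
    have hp0 : p = 0 := by
      apply Polynomial.eq_zero_of_infinite_isRoot
      apply Set.infinite_of_injective_forall_mem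
        (f := fun n : ℕ => ((54 * n + 108 : ℕ) : ℂ))
      · intro a b hab
        have := Nat.cast_injective (R := ℂ) hab
        omega
      · intro n
        exact heval n
    have : p.coeff i = g i := by
      rw [hp, finset_sum_coeff]
      simp only [coeff_C_mul, coeff_X_pow, mul_ite, mul_one, mul_zero]
      rw [Finset.sum_ite_eq s i g]
      simp [hi]
    rw [hp0, coeff_zero] at this
    exact this.symm
  have hindL : LinearIndependent ℂ (fun k => (⟨Sop k, hSmem k⟩ : L)) := by
    apply LinearIndependent.of_comp (L.toSubmodule.subtype)
    exact hind
  exact Module.Finite.not_linearIndependent_of_infinite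
    (fun k => (⟨Sop k, hSmem k⟩ : L)) hindL
end

section
/- Let A be a commutative domain, n a positive integer, and u ∈ A[t]. In the algebra U(A, u, n), every element can be written as a finite sum Σ_{ℓ>0, k≥0} α_{k,ℓ} ỹ^ℓ ẽ^k + Σ_{m≥0, r≥0} β_{m,r} x̃^m ẽ^r with coefficients α_{k,ℓ}, β_{m,r} ∈ A; i.e., the monomials ỹ^ℓ ẽ^k (ℓ > 0) and x̃^m ẽ^r span U(A, u, n) over A. -/
open Polynomial

/-- In `U(A, u, n)`, the monomials `ỹ^ℓ ẽ^k` (`ℓ > 0`) and `x̃^m ẽ^r` span the whole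
algebra over `A`. -/
theorem stmt18 (A : Type*) [CommRing A] [IsDomain A] (n : ℕ) (hn : 0 < n)
    (u : Polynomial A) :
    let x := RingQuot.mkAlgHom A (URel A u n) (FreeAlgebra.ι A 0)
    let y := RingQuot.mkAlgHom A (URel A u n) (FreeAlgebra.ι A 1)
    let e := RingQuot.mkAlgHom A (URel A u n) (FreeAlgebra.ι A 2)
    Submodule.span A
        ({z : UAlgebra A u n | ∃ ℓ > 0, ∃ k : ℕ, z = y ^ ℓ * e ^ k} ∪
         {z : UAlgebra A u n | ∃ m r : ℕ, z = x ^ m * e ^ r}) = ⊤ := by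
  intro x y e
  set S : Submodule A (UAlgebra A u n) := Submodule.span A
      ({z : UAlgebra A u n | ∃ ℓ > 0, ∃ k : ℕ, z = y ^ ℓ * e ^ k} ∪
       {z : UAlgebra A u n | ∃ m r : ℕ, z = x ^ m * e ^ r}) with hSdef
  -- basic relations in the quotient
  have hex : e * x = x * e + n • x := by
    have h := RingQuot.mkAlgHom_rel A (URel.ex (A := A) (u := u) (n := n))
    simpa [map_mul, map_add] using h
  have hey : e * y = y * e - n • y := by
    have h := RingQuot.mkAlgHom_rel A (URel.ey (A := A) (u := u) (n := n))
    simpa [map_mul, map_sub] using h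
  have hxy : x * y = aeval e u := by
    have h := RingQuot.mkAlgHom_rel A (URel.xy (A := A) (u := u) (n := n))
    rw [map_mul, ← Polynomial.aeval_def, ← Polynomial.aeval_algHom_apply] at h
    exact h
  have hyx : y * x = aeval (e + (n : UAlgebra A u n)) u := by
    have h := RingQuot.mkAlgHom_rel A (URel.yx (A := A) (u := u) (n := n))
    rw [map_mul, ← Polynomial.aeval_def, ← Polynomial.aeval_algHom_apply, map_add,
      map_natCast] at h
    exact h
  -- commutation with single generator
  have hxe : e * x = x * (e + (n : UAlgebra A u n)) := by
    rw [hex, mul_add, nsmul_eq_mul, (Nat.cast_commute n x).eq]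
  have hye : e * y = y * (e - (n : UAlgebra A u n)) := by
    rw [hey, mul_sub, nsmul_eq_mul, (Nat.cast_commute n y).eq]
  -- commutation with powers of e
  have hekx : ∀ k : ℕ, e ^ k * x = x * (e + (n : UAlgebra A u n)) ^ k := by
    intro k
    induction k with
    | zero => simp
    | succ k ih =>
      rw [pow_succ', mul_assoc, ih, ← mul_assoc, hxe, mul_assoc, ← pow_succ']
  have heky : ∀ k : ℕ, e ^ k * y = y * (e - (n : UAlgebra A u n)) ^ k := by
    intro k
    induction k with
    | zero => simp
    | succ k ih =>
      rw [pow_succ', mul_assoc, ih, ← mul_assoc, hye, mul_assoc, ← pow_succ']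
  -- polynomial expressions
  have haevX : aeval e (X + C (n : A)) = e + (n : UAlgebra A u n) := by
    simp [map_natCast]
  have haevX' : aeval e (X - C (n : A)) = e - (n : UAlgebra A u n) := by
    simp [map_natCast]
  -- membership lemmas
  have hxmem : ∀ (m : ℕ) (p : A[X]), x ^ m * aeval e p ∈ S := by
    intro m p
    induction p using Polynomial.induction_on' with
    | add p q hp hq => rw [map_add, mul_add]; exact S.add_mem hp hq
    | monomial i a =>
      have h1 : x ^ m * aeval e ((monomial i) a) = a • (x ^ m * e ^ i) := by
        rw [Polynomial.aeval_monomial, ← mul_assoc, ← Algebra.commutes a (x ^ m),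
          mul_assoc, ← Algebra.smul_def]
      rw [h1]
      exact S.smul_mem a (Submodule.subset_span (Or.inr ⟨m, i, rfl⟩))
  have hymem : ∀ (ℓ : ℕ) (p : A[X]), y ^ ℓ * aeval e p ∈ S := by
    intro ℓ p
    cases ℓ with
    | zero => simpa using hxmem 0 p
    | succ ℓ =>
      induction p using Polynomial.induction_on' with
      | add p q hp hq => rw [map_add, mul_add]; exact S.add_mem hp hq
      | monomial i a =>
        have h1 : y ^ (ℓ + 1) * aeval e ((monomial i) a) = a • (y ^ (ℓ + 1) * e ^ i) := by
          rw [Polynomial.aeval_monomial, ← mul_assoc, ← Algebra.commutes a (y ^ (ℓ+1)),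
            mul_assoc, ← Algebra.smul_def]
        rw [h1]
        exact S.smul_mem a (Submodule.subset_span (Or.inl ⟨ℓ + 1, Nat.succ_pos ℓ, i, rfl⟩))
  -- right multiplication by generators on the spanning monomials
  have key : ∀ z ∈ ({z : UAlgebra A u n | ∃ ℓ > 0, ∃ k : ℕ, z = y ^ ℓ * e ^ k} ∪
         {z : UAlgebra A u n | ∃ m r : ℕ, z = x ^ m * e ^ r}),
      z * x ∈ S ∧ z * y ∈ S ∧ z * e ∈ S := by
    rintro z (⟨ℓ, hℓ, k, rfl⟩ | ⟨m, r, rfl⟩)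
    · obtain ⟨ℓ, rfl⟩ : ∃ ℓ', ℓ = ℓ' + 1 := ⟨ℓ - 1, (Nat.succ_pred_eq_of_pos hℓ).symm⟩
      refine ⟨?_, ?_, ?_⟩
      · -- (y^(ℓ+1) e^k) x = y^ℓ (y x) (e+n)^k = y^ℓ aeval e (u.comp (X+C n) * (X+C n)^k)
        have : y ^ (ℓ + 1) * e ^ k * x =
            y ^ ℓ * aeval e (u.comp (X + C (n : A)) * (X + C (n : A)) ^ k) := by
          rw [mul_assoc, hekx k, pow_succ, mul_assoc, ← mul_assoc y x, map_mul, map_pow,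
            haevX, Polynomial.aeval_comp, haevX, ← hyx]
        rw [this]; exact hymem ℓ _
      · have : y ^ (ℓ + 1) * e ^ k * y =
            y ^ (ℓ + 1 + 1) * aeval e ((X - C (n : A)) ^ k) := by
          rw [map_pow, haevX', mul_assoc, heky, ← mul_assoc, ← pow_succ]
        rw [this]; exact hymem (ℓ + 1 + 1) _
      · have : y ^ (ℓ + 1) * e ^ k * e = y ^ (ℓ + 1) * aeval e ((X : A[X]) ^ (k + 1)) := by
          rw [mul_assoc, ← pow_succ]; simp
        rw [this]; exact hymem (ℓ + 1) _
    · refine ⟨?_, ?_, ?_⟩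
      · have : x ^ m * e ^ r * x = x ^ (m + 1) * aeval e ((X + C (n : A)) ^ r) := by
          rw [map_pow, haevX, mul_assoc, hekx, ← mul_assoc, ← pow_succ]
        rw [this]; exact hxmem (m + 1) _
      · cases m with
        | zero =>
          have : x ^ 0 * e ^ r * y = y ^ 1 * aeval e ((X - C (n : A)) ^ r) := by
            rw [map_pow, haevX', pow_zero, one_mul, heky, pow_one]
          rw [this]; exact hymem 1 _
        | succ m =>
          have : x ^ (m + 1) * e ^ r * y =
              x ^ m * aeval e (u * (X - C (n : A)) ^ r) := by
            rw [map_mul, map_pow, haevX', ← hxy, mul_assoc, heky, pow_succ, mul_assoc,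
              mul_assoc, ← mul_assoc x y]
          rw [this]; exact hxmem m _
      · have : x ^ m * e ^ r * e = x ^ m * aeval e ((X : A[X]) ^ (r + 1)) := by
          rw [mul_assoc, ← pow_succ]; simp
        rw [this]; exact hxmem m _
  have stab : ∀ g ∈ ({x, y, e} : Set (UAlgebra A u n)), ∀ s ∈ S, s * g ∈ S := by
    rintro g hg s hs
    induction hs using Submodule.span_induction with
    | mem z hz =>
      obtain ⟨h1, h2, h3⟩ := key z hz
      rcases hg with rfl | rfl | rfl
      · exact h1
      · exact h2
      · exact h3
    | zero => simpa using S.zero_mem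
    | add a b _ _ ha hb => rw [add_mul]; exact S.add_mem ha hb
    | smul a z _ hz => rw [smul_mul_assoc]; exact S.smul_mem a hz
  have one_mem : (1 : UAlgebra A u n) ∈ S := by
    exact Submodule.subset_span (Or.inr ⟨0, 0, by simp⟩)
  have main : ∀ f : FreeAlgebra A (Fin 3), ∀ s ∈ S,
      s * RingQuot.mkAlgHom A (URel A u n) f ∈ S := by
    intro f
    induction f using FreeAlgebra.induction with
    | grade0 r =>
      intro s hs
      rw [AlgHom.commutes, ← Algebra.commutes r s, ← Algebra.smul_def]
      exact S.smul_mem r hs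
    | grade1 i =>
      intro s hs
      fin_cases i
      · exact stab x (Or.inl rfl) s hs
      · exact stab y (Or.inr (Or.inl rfl)) s hs
      · exact stab e (Or.inr (Or.inr rfl)) s hs
    | mul f g hf hg =>
      intro s hs
      rw [map_mul, ← mul_assoc]
      exact hg _ (hf s hs)
    | add f g hf hg =>
      intro s hs
      rw [map_add, mul_add]
      exact S.add_mem (hf s hs) (hg s hs)
  rw [eq_top_iff]
  rintro a -
  obtain ⟨f, rfl⟩ := RingQuot.mkAlgHom_surjective A (URel A u n) a
  simpa using main f 1 one_mem
end
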